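/- Let X be a finite set, let τ be a fixed-point-free involutive permutation of X, let σ be a permutation of X, and let A ⊆ X satisfy τ(A) = A. For a permutation ρ of X, let ρ_A denote the first-return permutation of A: for x ∈ A, ρ_A(x) = ρ^k(x) where k is the least positive integer with ρ^k(x) ∈ A, and let τ|_A denote the restriction of τ to A. Define v(G[A]) = the number of orbits of σ on X that meet A, f(G[A]) = the number of orbits on A of τ|_A ∘ σ_A, v(G*[A]) = the number of orbits of τ∘σ on X that meet A, and f(G*[A]) = the number of orbits on A of τ|_A ∘ (τ∘σ)_A. Then γ(π_A ∘ σ, τ) − γ(σ, τ) = v(G[A]) + v(G*[A]) − f(G[A]) − f(G*[A]). (Proposition 6.1 expressed via rotation systems.) -/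
import Mathlib


/-- The partial-duality permutation `π_A` of a rotation system: it agrees with the
edge involution `τ` on the τ-invariant set `A` of half-edges and is the identity
off `A`. -/
def piPerm {X : Type*} [DecidableEq X] (τ : Equiv.Perm X) (A : Finset X)
    (hτ : ∀ x, τ (τ x) = x) (hA : A.image τ = A) : Equiv.Perm X where
  toFun x := if x ∈ A then τ x else x
  invFun x := if x ∈ A then τ x else x
  left_inv x := by
    by_cases hx : x ∈ A
    · have hτx : τ x ∈ A := by rw [← hA]; exact Finset.mem_image_of_mem τ hx
      simp [hx, hτx, hτ]
    · simp [hx]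
  right_inv x := by
    by_cases hx : x ∈ A
    · have hτx : τ x ∈ A := by rw [← hA]; exact Finset.mem_image_of_mem τ hx
      simp [hx, hτx, hτ]
    · simp [hx]

/-- The Euler genus `γ(σ, τ) = 2c − v + |X|/2 − f` of a rotation system `(σ, τ)` on
the finite set `X` of half-edges, where `v`, `f` and `c` are the numbers of orbits
of `σ`, of `τ∘σ`, and of the subgroup generated by `σ` and `τ`, respectively. -/
noncomputable def eulerGenus {X : Type*} [Fintype X] (σ τ : Equiv.Perm X) : ℤ :=
  2 * (Nat.card (MulAction.orbitRel.Quotient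
        (Subgroup.closure {σ, τ} : Subgroup (Equiv.Perm X)) X) : ℤ)
    - (Nat.card (MulAction.orbitRel.Quotient (Subgroup.zpowers σ) X) : ℤ)
    + (Fintype.card X : ℤ) / 2
    - (Nat.card (MulAction.orbitRel.Quotient (Subgroup.zpowers (τ * σ)) X) : ℤ)

/-- The orbit equivalence of the iteration of a map `f` (for a bijection of a finite
set this relation identifies `x` and `y` exactly when they lie in the same orbit of
the permutation `f`). -/
def fnSetoid {α : Type*} (f : α → α) : Setoid α where
  r x y := ∃ m n : ℕ, f^[m] x = f^[n] y
  iseqv := by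
    constructor
    · intro x; exact ⟨0, 0, rfl⟩
    · rintro x y ⟨m, n, h⟩; exact ⟨n, m, h.symm⟩
    · rintro x y z ⟨m, n, h1⟩ ⟨p, q, h2⟩
      refine ⟨p + m, n + q, ?_⟩
      calc f^[p + m] x = f^[p] (f^[m] x) := Function.iterate_add_apply f p m x
        _ = f^[p] (f^[n] y) := by rw [h1]
        _ = f^[n] (f^[p] y) := by
              rw [← Function.iterate_add_apply, ← Function.iterate_add_apply, Nat.add_comm]
        _ = f^[n] (f^[q] z) := by rw [h2]
        _ = f^[n + q] z := (Function.iterate_add_apply f n q z).symm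

/-- The number of orbits of a map `f` on a finite set. -/
noncomputable def fnOrbitCount {α : Type*} (f : α → α) : ℕ :=
  Nat.card (Quotient (fnSetoid f))

/-- The first-return map `ρ_A` of a permutation `ρ` to a subset `A`: for `x ∈ A`,
`ρ_A x = ρ^k x` where `k` is the least positive integer with `ρ^k x ∈ A`. -/
noncomputable def firstReturn {X : Type*} [Fintype X] [DecidableEq X]
    (ρ : Equiv.Perm X) (A : Finset X) (x : {a // a ∈ A}) : {a // a ∈ A} :=
  have h : ∃ k, 0 < k ∧ (ρ ^ k) x.1 ∈ A :=
    ⟨orderOf ρ, orderOf_pos ρ, by rw [pow_orderOf_eq_one]; simp only [Equiv.Perm.coe_one, id_eq]; exact x.2⟩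
  ⟨(ρ ^ Nat.find h) x.1, (Nat.find_spec h).2⟩

/-- The restriction `τ|_A` of the involution `τ` to the τ-invariant subset `A`. -/
def restrictTau {X : Type*} [DecidableEq X] (τ : Equiv.Perm X) (A : Finset X)
    (hA : A.image τ = A) (x : {a // a ∈ A}) : {a // a ∈ A} :=
  ⟨τ x.1, by
    have h : τ x.1 ∈ A.image τ := Finset.mem_image_of_mem τ x.2
    rwa [hA] at h⟩

/-- The number of orbits of the permutation `σ` on `X` that meet the subset `A`. -/
noncomputable def orbitsMeeting {X : Type*} [Fintype X] (σ : Equiv.Perm X)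
    (A : Finset X) : ℕ :=
  Nat.card ((Quotient.mk (MulAction.orbitRel (Subgroup.zpowers σ) X)) '' (A : Set X))


set_option linter.unusedSectionVars false
section Aux

variable {X : Type*} [Fintype X]

lemma fnRel_def {α : Type*} (f : α → α) (x y : α) :
    (fnSetoid f).r x y ↔ ∃ m n : ℕ, f^[m] x = f^[n] y := Iff.rfl

lemma iterate_orderOf (ρ : Equiv.Perm X) (n : ℕ) (x : X) :
    (⇑ρ)^[orderOf ρ * n] x = x := by
  rw [Equiv.Perm.iterate_eq_pow, pow_mul, pow_orderOf_eq_one, one_pow]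
  rfl

lemma rel_forward (ρ : Equiv.Perm X) (a b : X) :
    (fnSetoid ⇑ρ).r a b ↔ ∃ k, (⇑ρ)^[k] a = b := by
  constructor
  · rintro ⟨m, n, h⟩
    refine ⟨n * (orderOf ρ - 1) + m, ?_⟩
    have hN : 0 < orderOf ρ := orderOf_pos ρ
    have key : n * (orderOf ρ - 1) + n = orderOf ρ * n := by
      obtain ⟨N, hNe⟩ := Nat.exists_eq_add_of_lt hN
      rw [hNe]; simp; ring
    have := iterate_orderOf ρ n b
    calc (⇑ρ)^[n * (orderOf ρ - 1) + m] a
        = (⇑ρ)^[n * (orderOf ρ - 1)] ((⇑ρ)^[m] a) := Function.iterate_add_apply _ _ _ _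
      _ = (⇑ρ)^[n * (orderOf ρ - 1)] ((⇑ρ)^[n] b) := by rw [h]
      _ = (⇑ρ)^[n * (orderOf ρ - 1) + n] b := (Function.iterate_add_apply _ _ _ _).symm
      _ = b := by rw [key]; exact this
  · rintro ⟨k, h⟩
    exact ⟨k, 0, h⟩

lemma setoid_eq (ρ : Equiv.Perm X) :
    MulAction.orbitRel (Subgroup.zpowers ρ) X = fnSetoid ⇑ρ := by
  ext x y
  rw [MulAction.orbitRel_apply, MulAction.mem_orbit_iff]
  constructor
  · rintro ⟨⟨g, k, rfl⟩, hg⟩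
    have hg' : (ρ ^ k) y = x := hg
    have hN : 0 < (orderOf ρ : ℤ) := by exact_mod_cast orderOf_pos ρ
    have hmod : ρ ^ k = ρ ^ (k % (orderOf ρ : ℤ)).toNat := by
      rw [← zpow_natCast, Int.toNat_of_nonneg (Int.emod_nonneg k (by omega)),
        zpow_mod_orderOf]
    exact ⟨0, (k % (orderOf ρ : ℤ)).toNat, by
      simp only [Function.iterate_zero, id_eq, Equiv.Perm.iterate_eq_pow]
      rw [← hmod]; exact hg'.symm⟩
  · intro h
    have := (rel_forward ρ y x).mp ((fnSetoid ⇑ρ).symm h)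
    obtain ⟨k, hk⟩ := this
    exact ⟨⟨ρ ^ k, Subgroup.npow_mem_zpowers ρ k⟩, hk⟩

end Aux
section Aux2

variable {X : Type*} [Fintype X] [DecidableEq X]

lemma firstReturn_exists (ρ : Equiv.Perm X) (A : Finset X) (x : {a // a ∈ A}) :
    ∃ k, 0 < k ∧ (ρ ^ k) x.1 ∈ A :=
  ⟨orderOf ρ, orderOf_pos ρ, by rw [pow_orderOf_eq_one]; simpa using x.2⟩

lemma firstReturn_spec (ρ : Equiv.Perm X) (A : Finset X) (x : {a // a ∈ A}) :
    ∃ k, 0 < k ∧ (firstReturn ρ A x).1 = (ρ ^ k) x.1 ∧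
      ∀ j, 0 < j → j < k → (ρ ^ j) x.1 ∉ A := by
  refine ⟨Nat.find (firstReturn_exists ρ A x), (Nat.find_spec (firstReturn_exists ρ A x)).1,
    rfl, fun j hj hjk hmem => Nat.find_min (firstReturn_exists ρ A x) hjk ⟨hj, hmem⟩⟩

lemma firstReturn_eq (ρ : Equiv.Perm X) (A : Finset X) (x : {a // a ∈ A}) (k : ℕ)
    (hk : 0 < k) (hmem : (ρ ^ k) x.1 ∈ A)
    (hmin : ∀ j, 0 < j → j < k → (ρ ^ j) x.1 ∉ A) :
    (firstReturn ρ A x).1 = (ρ ^ k) x.1 := by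
  obtain ⟨k', hk', heq, hmin'⟩ := firstReturn_spec ρ A x
  have hkk : k' = k := by
    rcases lt_trichotomy k' k with h | h | h
    · have : (ρ ^ k') x.1 ∈ A := heq ▸ (firstReturn ρ A x).2
      exact absurd this (hmin k' hk' h)
    · exact h
    · exact absurd hmem (hmin' k hk h)
  rw [heq, hkk]

end Aux2
section Aux3

variable {X : Type*} [Fintype X] [DecidableEq X]

lemma fr_val_iterate (ρ : Equiv.Perm X) (A : Finset X) (m : ℕ) (x : {a // a ∈ A}) :
    ∃ K, ((firstReturn ρ A)^[m] x).1 = (⇑ρ)^[K] x.1 := by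
  induction m generalizing x with
  | zero => exact ⟨0, rfl⟩
  | succ m ih =>
    obtain ⟨k, _, hval, _⟩ := firstReturn_spec ρ A x
    obtain ⟨K, hK⟩ := ih (firstReturn ρ A x)
    refine ⟨K + k, ?_⟩
    rw [Function.iterate_succ_apply, hK, hval, Equiv.Perm.iterate_eq_pow,
      Equiv.Perm.iterate_eq_pow, ← Equiv.Perm.mul_apply, ← pow_add]

lemma fr_forward (ρ : Equiv.Perm X) (A : Finset X) (k : ℕ) (x y : {a // a ∈ A})
    (h : (⇑ρ)^[k] x.1 = y.1) : ∃ m, (firstReturn ρ A)^[m] x = y := by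
  induction k using Nat.strong_induction_on generalizing x with
  | _ k ih =>
    rcases Nat.eq_zero_or_pos k with rfl | hk
    · exact ⟨0, Subtype.ext h⟩
    · obtain ⟨j, hj, hval, hmin⟩ := firstReturn_spec ρ A x
      have hjk : j ≤ k := by
        by_contra hlt
        exact hmin k hk (lt_of_not_ge hlt) (by rw [← Equiv.Perm.iterate_eq_pow, h]; exact y.2)
      have hstep : (⇑ρ)^[k - j] (firstReturn ρ A x).1 = y.1 := by
        rw [hval, ← Equiv.Perm.iterate_eq_pow, ← Function.iterate_add_apply,
          Nat.sub_add_cancel hjk, h]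
      obtain ⟨m, hm⟩ := ih (k - j) (by omega) (firstReturn ρ A x) hstep
      exact ⟨m + 1, by rw [Function.iterate_add_apply, Function.iterate_one]; exact hm⟩

lemma fr_rel_of_rel (ρ : Equiv.Perm X) (A : Finset X) (x y : {a // a ∈ A})
    (h : (fnSetoid ⇑ρ).r x.1 y.1) : (fnSetoid (firstReturn ρ A)).r x y := by
  obtain ⟨k, hk⟩ := (rel_forward ρ x.1 y.1).mp h
  obtain ⟨m, hm⟩ := fr_forward ρ A k x y hk
  exact ⟨m, 0, hm⟩

lemma rel_of_fr_rel (ρ : Equiv.Perm X) (A : Finset X) (x y : {a // a ∈ A})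
    (h : (fnSetoid (firstReturn ρ A)).r x y) : (fnSetoid ⇑ρ).r x.1 y.1 := by
  obtain ⟨m, n, hmn⟩ := h
  obtain ⟨K, hK⟩ := fr_val_iterate ρ A m x
  obtain ⟨L, hL⟩ := fr_val_iterate ρ A n y
  exact ⟨K, L, by rw [← hK, ← hL, hmn]⟩

lemma countA (ρ : Equiv.Perm X) (A : Finset X) :
    Nat.card ((Quotient.mk (fnSetoid ⇑ρ)) '' (A : Set X)) = fnOrbitCount (firstReturn ρ A) := by
  symm
  refine Nat.card_congr (Equiv.ofBijective
    (fun c => Quotient.liftOn c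
      (fun x => (⟨Quotient.mk (fnSetoid ⇑ρ) x.1, ⟨x.1, x.2, rfl⟩⟩ :
        ((Quotient.mk (fnSetoid ⇑ρ)) '' (A : Set X))))
      (fun a b h => Subtype.ext (Quotient.sound (rel_of_fr_rel ρ A a b h)))) ⟨?_, ?_⟩)
  · intro c d
    induction c using Quotient.ind
    induction d using Quotient.ind
    intro h
    rename_i a b
    have : Quotient.mk (fnSetoid ⇑ρ) a.1 = Quotient.mk (fnSetoid ⇑ρ) b.1 :=
      congrArg Subtype.val h
    exact Quotient.sound (fr_rel_of_rel ρ A a b (Quotient.exact this))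
  · rintro ⟨c, a, ha, rfl⟩
    exact ⟨Quotient.mk _ ⟨a, ha⟩, rfl⟩

end Aux3
section Aux4

variable {X : Type*} [Fintype X] [DecidableEq X]

/-- points whose forward orbit avoids A -/
def Avoids (ρ : Equiv.Perm X) (A : Finset X) (x : X) : Prop := ∀ n, (⇑ρ)^[n] x ∉ A

lemma mem_image_iff_not_avoids (ρ : Equiv.Perm X) (A : Finset X) (x : X) :
    Quotient.mk (fnSetoid ⇑ρ) x ∈ (Quotient.mk (fnSetoid ⇑ρ)) '' (A : Set X) ↔
      ¬ Avoids ρ A x := by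
  constructor
  · rintro ⟨a, ha, hq⟩ hav
    obtain ⟨k, hk⟩ := (rel_forward ρ x a).mp ((fnSetoid ⇑ρ).symm (Quotient.exact hq))
    exact hav k (hk ▸ ha)
  · intro hav
    rcases not_forall.mp hav with ⟨n, hn⟩
    rw [not_not] at hn
    exact ⟨(⇑ρ)^[n] x, hn, Quotient.sound ⟨0, n, rfl⟩⟩

lemma compl_mem_iff_avoids (ρ : Equiv.Perm X) (A : Finset X)
    (c : Quotient (fnSetoid ⇑ρ)) :
    c ∈ ((Quotient.mk (fnSetoid ⇑ρ)) '' (A : Set X))ᶜ ↔ Avoids ρ A c.out := by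
  rw [Set.mem_compl_iff]
  have := mem_image_iff_not_avoids ρ A c.out
  rw [Quotient.out_eq] at this
  rw [this, not_not]

lemma avoids_iterate_eq (ρ ρ' : Equiv.Perm X) (A : Finset X)
    (H2 : ∀ x, ρ x ∉ A → ρ' x = ρ x) (x : X) (hx : Avoids ρ A x) :
    ∀ n, (⇑ρ')^[n] x = (⇑ρ)^[n] x := by
  intro n
  induction n with
  | zero => rfl
  | succ n ih =>
    rw [Function.iterate_succ_apply', Function.iterate_succ_apply', ih]
    have h1 := hx (n + 1)
    rw [Function.iterate_succ_apply'] at h1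
    exact H2 _ h1

lemma avoids_out (ρ : Equiv.Perm X) (A : Finset X) (x : X) (hx : Avoids ρ A x) :
    Avoids ρ A (Quotient.out (Quotient.mk (fnSetoid ⇑ρ) x)) := by
  rw [← compl_mem_iff_avoids]
  rw [Set.mem_compl_iff, mem_image_iff_not_avoids ρ A x, not_not] at *
  exact hx

lemma count_off (ρ ρ' : Equiv.Perm X) (A : Finset X)
    (H1 : ∀ x, ρ' x ∈ A ↔ ρ x ∈ A) (H2 : ∀ x, ρ x ∉ A → ρ' x = ρ x) :
    fnOrbitCount ⇑ρ' + Nat.card ((Quotient.mk (fnSetoid ⇑ρ)) '' (A : Set X)) =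
      fnOrbitCount ⇑ρ + Nat.card ((Quotient.mk (fnSetoid ⇑ρ')) '' (A : Set X)) := by
  have H2' : ∀ x, ρ' x ∉ A → ρ x = ρ' x := fun x hx =>
    (H2 x (fun h => hx ((H1 x).mpr h))).symm
  have havoid : ∀ x, Avoids ρ A x ↔ Avoids ρ' A x := by
    intro x
    constructor
    · intro h n; rw [avoids_iterate_eq ρ ρ' A H2 x h n]; exact h n
    · intro h n; rw [avoids_iterate_eq ρ' ρ A H2' x h n]; exact h n
  have compl_eq :
      Nat.card ↥(((Quotient.mk (fnSetoid ⇑ρ)) '' (A : Set X))ᶜ) =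
      Nat.card ↥(((Quotient.mk (fnSetoid ⇑ρ')) '' (A : Set X))ᶜ) := by
    refine Nat.card_congr (Equiv.ofBijective
      (fun c => ⟨Quotient.mk (fnSetoid ⇑ρ') c.1.out, ?_⟩) ⟨?_, ?_⟩)
    · have hav : Avoids ρ A c.1.out := (compl_mem_iff_avoids ρ A c.1).mp c.2
      have hav' : Avoids ρ' A c.1.out := (havoid _).mp hav
      rw [Set.mem_compl_iff, mem_image_iff_not_avoids, not_not]
      exact hav'
    · rintro ⟨c, hc⟩ ⟨d, hd⟩ h
      have h' : Quotient.mk (fnSetoid ⇑ρ') c.out = Quotient.mk (fnSetoid ⇑ρ') d.out :=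
        congrArg Subtype.val h
      obtain ⟨k, hk⟩ := (rel_forward ρ' c.out d.out).mp (Quotient.exact h')
      have hav : Avoids ρ A c.out := (compl_mem_iff_avoids ρ A c).mp hc
      have hiter : (⇑ρ)^[k] c.out = d.out := by
        rw [← avoids_iterate_eq ρ ρ' A H2 c.out hav k]; exact hk
      apply Subtype.ext
      show c = d
      rw [← Quotient.out_eq c, ← Quotient.out_eq d]
      exact Quotient.sound ⟨k, 0, hiter⟩
    · rintro ⟨d, hd⟩
      set x := d.out with hx
      have hav' : Avoids ρ' A x := (compl_mem_iff_avoids ρ' A d).mp hd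
      have hav : Avoids ρ A x := (havoid x).mpr hav'
      have hmem : Quotient.mk (fnSetoid ⇑ρ) x ∈
          ((Quotient.mk (fnSetoid ⇑ρ)) '' (A : Set X))ᶜ := by
        rw [Set.mem_compl_iff, mem_image_iff_not_avoids, not_not]; exact hav
      refine ⟨⟨Quotient.mk (fnSetoid ⇑ρ) x, hmem⟩, ?_⟩
      apply Subtype.ext
      show Quotient.mk (fnSetoid ⇑ρ') (Quotient.out (Quotient.mk (fnSetoid ⇑ρ) x)) = d
      have hrel : (fnSetoid ⇑ρ).r (Quotient.out (Quotient.mk (fnSetoid ⇑ρ) x)) x :=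
        Quotient.exact (Quotient.out_eq _)
      obtain ⟨k, hk⟩ := (rel_forward ρ _ x).mp hrel
      have havo : Avoids ρ A (Quotient.out (Quotient.mk (fnSetoid ⇑ρ) x)) :=
        avoids_out ρ A x hav
      have hiter : (⇑ρ')^[k] (Quotient.out (Quotient.mk (fnSetoid ⇑ρ) x)) = x := by
        rw [avoids_iterate_eq ρ ρ' A H2 _ havo k]; exact hk
      calc Quotient.mk (fnSetoid ⇑ρ') (Quotient.out (Quotient.mk (fnSetoid ⇑ρ) x))
          = Quotient.mk (fnSetoid ⇑ρ') x := Quotient.sound ⟨k, 0, hiter⟩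
        _ = d := by rw [hx, Quotient.out_eq]
  have hsplit : fnOrbitCount ⇑ρ =
      Nat.card ((Quotient.mk (fnSetoid ⇑ρ)) '' (A : Set X)) +
      Nat.card ↥(((Quotient.mk (fnSetoid ⇑ρ)) '' (A : Set X))ᶜ) := by
    rw [fnOrbitCount, Nat.card_coe_set_eq, Nat.card_coe_set_eq,
      Set.ncard_add_ncard_compl]
  have hsplit' : fnOrbitCount ⇑ρ' =
      Nat.card ((Quotient.mk (fnSetoid ⇑ρ')) '' (A : Set X)) +
      Nat.card ↥(((Quotient.mk (fnSetoid ⇑ρ')) '' (A : Set X))ᶜ) := by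
    rw [fnOrbitCount, Nat.card_coe_set_eq, Nat.card_coe_set_eq,
      Set.ncard_add_ncard_compl]
  rw [hsplit, hsplit', compl_eq]
  ring

end Aux4
section Aux5

variable {X : Type*} [Fintype X] [DecidableEq X]

lemma tau_mem_iff (τ : Equiv.Perm X) (A : Finset X) (hA : A.image τ = A) (x : X) :
    τ x ∈ A ↔ x ∈ A := by
  constructor
  · intro h
    rw [← hA] at h
    obtain ⟨a, ha, hax⟩ := Finset.mem_image.mp h
    rwa [← τ.injective hax]
  · intro h
    rw [← hA]
    exact Finset.mem_image_of_mem τ h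

lemma fr_identity (τ ρ ρ' : Equiv.Perm X) (A : Finset X) (hA : A.image τ = A)
    (hyp1 : ∀ x, ρ x ∈ A → ρ' x = τ (ρ x)) (hyp2 : ∀ x, ρ x ∉ A → ρ' x = ρ x) :
    firstReturn ρ' A = restrictTau τ A hA ∘ firstReturn ρ A := by
  funext x
  obtain ⟨k, hk, hval, hmin⟩ := firstReturn_spec ρ A x
  have hmem : (ρ ^ k) x.1 ∈ A := hval ▸ (firstReturn ρ A x).2
  have claim1 : ∀ j, j < k → (⇑ρ')^[j] x.1 = (⇑ρ)^[j] x.1 := by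
    intro j
    induction j with
    | zero => intro _; rfl
    | succ n ih =>
      intro hlt
      rw [Function.iterate_succ_apply', Function.iterate_succ_apply', ih (by omega)]
      have hnot : ρ ((⇑ρ)^[n] x.1) ∉ A := by
        have := hmin (n + 1) (by omega) hlt
        rwa [← Equiv.Perm.iterate_eq_pow, Function.iterate_succ_apply'] at this
      exact hyp2 _ hnot
  have claim2 : (⇑ρ')^[k] x.1 = τ ((ρ ^ k) x.1) := by
    obtain ⟨m, rfl⟩ : ∃ m, k = m + 1 := ⟨k - 1, by omega⟩
    rw [Function.iterate_succ_apply', claim1 m (by omega)]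
    have hstep : ρ ((⇑ρ)^[m] x.1) = (ρ ^ (m + 1)) x.1 :=
      (Function.iterate_succ_apply' (⇑ρ) m x.1).symm
    have hin : ρ ((⇑ρ)^[m] x.1) ∈ A := hstep ▸ hmem
    rw [hyp1 _ hin]
    congr 1
  have claim4 : (ρ' ^ k) x.1 ∈ A := by
    rw [← Equiv.Perm.iterate_eq_pow, claim2, tau_mem_iff τ A hA]
    exact hmem
  have claim3 : ∀ j, 0 < j → j < k → (ρ' ^ j) x.1 ∉ A := by
    intro j hj hjk
    rw [← Equiv.Perm.iterate_eq_pow, claim1 j hjk, Equiv.Perm.iterate_eq_pow]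
    exact hmin j hj hjk
  have := firstReturn_eq ρ' A x k hk claim4 claim3
  apply Subtype.ext
  rw [this, Function.comp_apply]
  show (ρ' ^ k) x.1 = τ (firstReturn ρ A x).1
  rw [hval, ← Equiv.Perm.iterate_eq_pow, claim2]

lemma half (τ ρ ρ' : Equiv.Perm X) (A : Finset X) (hA : A.image τ = A)
    (hyp1 : ∀ x, ρ x ∈ A → ρ' x = τ (ρ x)) (hyp2 : ∀ x, ρ x ∉ A → ρ' x = ρ x) :
    (fnOrbitCount ⇑ρ' : ℤ) - fnOrbitCount ⇑ρ =
      (fnOrbitCount (restrictTau τ A hA ∘ firstReturn ρ A) : ℤ)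
        - Nat.card ((Quotient.mk (fnSetoid ⇑ρ)) '' (A : Set X)) := by
  have H1 : ∀ x, ρ' x ∈ A ↔ ρ x ∈ A := by
    intro x
    by_cases h : ρ x ∈ A
    · rw [hyp1 x h, tau_mem_iff τ A hA]
    · rw [hyp2 x h]
  have hco := count_off ρ ρ' A H1 hyp2
  have hca := countA ρ' A
  rw [fr_identity τ ρ ρ' A hA hyp1 hyp2] at hca
  omega

end Aux5
section Aux6

variable {X : Type*} [Fintype X] [DecidableEq X]

lemma orbit_mono (ρ ρ' τ : Equiv.Perm X)
    (h : ∀ z, ρ' z = ρ z ∨ ρ' z = τ (ρ z)) (y x : X)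
    (hx : x ∈ MulAction.orbit (Subgroup.closure ({ρ', τ} : Set (Equiv.Perm X))) y) :
    x ∈ MulAction.orbit (Subgroup.closure ({ρ, τ} : Set (Equiv.Perm X))) y := by
  set O : Set X := MulAction.orbit (Subgroup.closure ({ρ, τ} : Set (Equiv.Perm X))) y with hO
  have hclosed : ∀ (u : Equiv.Perm X), u ∈ Subgroup.closure ({ρ, τ} : Set (Equiv.Perm X)) →
      ∀ z ∈ O, u z ∈ O := by
    rintro u hu z ⟨g, rfl⟩
    exact ⟨(⟨u, hu⟩ : Subgroup.closure ({ρ, τ} : Set (Equiv.Perm X))) * g,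
      by show (⟨u, hu⟩ * g : ↥(Subgroup.closure ({ρ, τ} : Set (Equiv.Perm X)))) • y = _
         rw [mul_smul]; rfl⟩
  have hρ : ρ ∈ Subgroup.closure ({ρ, τ} : Set (Equiv.Perm X)) :=
    Subgroup.subset_closure (by simp)
  have hτ : τ ∈ Subgroup.closure ({ρ, τ} : Set (Equiv.Perm X)) :=
    Subgroup.subset_closure (by simp)
  have hbij : ∀ g ∈ Subgroup.closure ({ρ', τ} : Set (Equiv.Perm X)),
      Set.BijOn ⇑g O O := by
    intro g hg
    induction hg using Subgroup.closure_induction with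
    | mem g hg =>
      have hmt : Set.MapsTo ⇑g O O := by
        rcases Set.mem_insert_iff.mp hg with rfl | hg
        · intro z hz
          rcases h z with h' | h'
          · rw [h']; exact hclosed ρ hρ z hz
          · rw [h']; exact hclosed τ hτ _ (hclosed ρ hρ z hz)
        · rw [Set.mem_singleton_iff.mp hg]
          intro z hz
          exact hclosed τ hτ z hz
      exact ((Set.toFinite O).injOn_iff_bijOn_of_mapsTo hmt).mp g.injective.injOn
    | one => simpa using Set.bijOn_id O
    | mul g₁ g₂ _ _ ih₁ ih₂ => exact ih₁.comp ih₂
    | inv g _ ih =>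
      have hmt : Set.MapsTo ⇑g⁻¹ O O := by
        intro z hz
        obtain ⟨w, hw, hgw⟩ := ih.surjOn hz
        have : g⁻¹ z = w := by rw [← hgw]; simp
        rwa [this]
      exact ((Set.toFinite O).injOn_iff_bijOn_of_mapsTo hmt).mp g⁻¹.injective.injOn
  obtain ⟨g, rfl⟩ := hx
  exact (hbij g.1 g.2).mapsTo (MulAction.mem_orbit_self y)

lemma closure_count_eq (ρ ρ' τ : Equiv.Perm X)
    (h : ∀ z, ρ' z = ρ z ∨ ρ' z = τ (ρ z))
    (h' : ∀ z, ρ z = ρ' z ∨ ρ z = τ (ρ' z)) :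
    Nat.card (MulAction.orbitRel.Quotient
        (Subgroup.closure ({ρ', τ} : Set (Equiv.Perm X))) X) =
      Nat.card (MulAction.orbitRel.Quotient
        (Subgroup.closure ({ρ, τ} : Set (Equiv.Perm X))) X) := by
  have hs : MulAction.orbitRel (Subgroup.closure ({ρ', τ} : Set (Equiv.Perm X))) X =
      MulAction.orbitRel (Subgroup.closure ({ρ, τ} : Set (Equiv.Perm X))) X := by
    ext x y
    rw [MulAction.orbitRel_apply, MulAction.orbitRel_apply]
    exact ⟨orbit_mono ρ ρ' τ h y x, orbit_mono ρ' ρ τ h' y x⟩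
  show Nat.card (Quotient (MulAction.orbitRel _ X)) =
    Nat.card (Quotient (MulAction.orbitRel _ X))
  rw [hs]

end Aux6

section Aux7

variable {X : Type*} [Fintype X] [DecidableEq X]

lemma zpowers_count (ρ : Equiv.Perm X) :
    Nat.card (MulAction.orbitRel.Quotient (Subgroup.zpowers ρ) X) = fnOrbitCount ⇑ρ := by
  show Nat.card (Quotient (MulAction.orbitRel _ X)) = Nat.card (Quotient (fnSetoid ⇑ρ))
  rw [setoid_eq]

lemma orbitsMeeting_eq (ρ : Equiv.Perm X) (A : Finset X) :
    orbitsMeeting ρ A = Nat.card ((Quotient.mk (fnSetoid ⇑ρ)) '' (A : Set X)) := by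
  unfold orbitsMeeting
  rw [setoid_eq]

end Aux7


/-- **Proposition 6.1 via rotation systems.**  Let `(σ, τ)` be a rotation system on
the finite set `X` of half-edges (`τ` a fixed-point-free involution) and let
`A ⊆ X` be τ-invariant.  Then the change of Euler genus under partial duality
relative to `A` is
`γ(π_A∘σ, τ) − γ(σ, τ) = v(G[A]) + v(G*[A]) − f(G[A]) − f(G*[A])`, where
`v(G[A])` (resp. `v(G*[A])`) is the number of orbits of `σ` (resp. of `τ∘σ`)
meeting `A`, and `f(G[A])` (resp. `f(G*[A])`) is the number of orbits on `A` of
`τ|_A ∘ σ_A` (resp. of `τ|_A ∘ (τ∘σ)_A`), `ρ_A` denoting the first-return map. -/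
theorem partial_dual_genus_change {X : Type*} [Fintype X] [DecidableEq X]
    (τ σ : Equiv.Perm X) (hτ : ∀ x, τ (τ x) = x) (hfp : ∀ x, τ x ≠ x)
    (A : Finset X) (hA : A.image τ = A) :
    eulerGenus (piPerm τ A hτ hA * σ) τ - eulerGenus σ τ =
      (orbitsMeeting σ A : ℤ) + (orbitsMeeting (τ * σ) A : ℤ)
        - (fnOrbitCount (restrictTau τ A hA ∘ firstReturn σ A) : ℤ)
        - (fnOrbitCount (restrictTau τ A hA ∘ firstReturn (τ * σ) A) : ℤ) := by
  set σ' : Equiv.Perm X := piPerm τ A hτ hA * σ with hσ'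
  have happ : ∀ x, σ' x = if σ x ∈ A then τ (σ x) else σ x := by
    intro x; rfl
  have hyp1v : ∀ x, σ x ∈ A → σ' x = τ (σ x) := by
    intro x hx; rw [happ, if_pos hx]
  have hyp2v : ∀ x, σ x ∉ A → σ' x = σ x := by
    intro x hx; rw [happ, if_neg hx]
  have hyp1f : ∀ x, (τ * σ) x ∈ A → (τ * σ') x = τ ((τ * σ) x) := by
    intro x hx
    have hσA : σ x ∈ A := by
      rwa [Equiv.Perm.mul_apply, tau_mem_iff τ A hA] at hx
    show τ (σ' x) = τ (τ (σ x))
    rw [hyp1v x hσA]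
  have hyp2f : ∀ x, (τ * σ) x ∉ A → (τ * σ') x = (τ * σ) x := by
    intro x hx
    have hσA : σ x ∉ A := by
      rwa [Equiv.Perm.mul_apply, tau_mem_iff τ A hA] at hx
    show τ (σ' x) = τ (σ x)
    rw [hyp2v x hσA]
  have h : ∀ z, σ' z = σ z ∨ σ' z = τ (σ z) := by
    intro z
    by_cases hz : σ z ∈ A
    · exact Or.inr (hyp1v z hz)
    · exact Or.inl (hyp2v z hz)
  have h' : ∀ z, σ z = σ' z ∨ σ z = τ (σ' z) := by
    intro z
    by_cases hz : σ z ∈ A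
    · refine Or.inr ?_
      rw [hyp1v z hz, hτ]
    · exact Or.inl (hyp2v z hz).symm
  have hv := half τ σ σ' A hA hyp1v hyp2v
  have hf := half τ (τ * σ) (τ * σ') A hA hyp1f hyp2f
  have hc := closure_count_eq σ σ' τ h h'
  rw [eulerGenus, eulerGenus, zpowers_count σ', zpowers_count σ,
    zpowers_count (τ * σ'), zpowers_count (τ * σ),
    orbitsMeeting_eq σ A, orbitsMeeting_eq (τ * σ) A, hc]
  linarith [hv, hf]
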